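/- Let k ≥ 2 be an integer and a₁, a₂, b₁, b₂, c₁, c₂ ∈ ℂ satisfy a₁b₂ + a₂b₁ = 0 and a₁c₂ + a₂c₁ = 0, with (a₁, a₂) ≠ (0, 0). Let A be the 3×4 complex matrix with rows (0, a₁, a₂, 0), (b₂, 0, 0, c₂), (b₁, 0, 0, c₁). Then there exist q, r, s, t, u ∈ ℂ with q ≠ 0 and ur − st ≠ 0 such that, with G = [[q,0,0],[0,r,s],[0,t,u]] and Q the 4×4 matrix with rows (q^k, 0, 0, 0), (0, rq^{k-1}, sq^{k-1}, 0), (0, tq^{k-1}, uq^{k-1}, 0), (0, 0, 0, (ur−st)q^{k-2}), the matrix G⁻¹·A·Q has vanishing entries in positions (1,3), (2,1), and (2,4); equivalently, G⁻¹AQ has the form with rows (0, a₁', 0, 0), (0, 0, 0, 0), (b₁', 0, 0, c₁') for some a₁', b₁', c₁' ∈ ℂ. -/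

import Mathlib

theorem codifferential_equivalent_to_one_in_degree_one_part (k : ℕ) (hk : 2 ≤ k)
    (a₁ a₂ b₁ b₂ c₁ c₂ : ℂ)
    (hb : a₁ * b₂ + a₂ * b₁ = 0) (hc : a₁ * c₂ + a₂ * c₁ = 0)
    (ha : (a₁, a₂) ≠ (0, 0)) :
    ∃ q r s t u : ℂ, q ≠ 0 ∧ u * r - s * t ≠ 0 ∧
      let A : Matrix (Fin 3) (Fin 4) ℂ := !![0, a₁, a₂, 0; b₂, 0, 0, c₂; b₁, 0, 0, c₁]
      let G : Matrix (Fin 3) (Fin 3) ℂ := !![q, 0, 0; 0, r, s; 0, t, u]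
      let Q : Matrix (Fin 4) (Fin 4) ℂ := !![q ^ k, 0, 0, 0;
        0, r * q ^ (k - 1), s * q ^ (k - 1), 0;
        0, t * q ^ (k - 1), u * q ^ (k - 1), 0;
        0, 0, 0, (u * r - s * t) * q ^ (k - 2)]
      (G⁻¹ * A * Q) 0 2 = 0 ∧ (G⁻¹ * A * Q) 1 0 = 0 ∧ (G⁻¹ * A * Q) 1 3 = 0 ∧
      ∃ a₁' b₁' c₁' : ℂ,
        G⁻¹ * A * Q = !![0, a₁', 0, 0; 0, 0, 0, 0; b₁', 0, 0, c₁'] := by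
  set d : ℂ := a₁ * (starRingEnd ℂ) a₁ + a₂ * (starRingEnd ℂ) a₂ with hd_def
  have hd : d ≠ 0 := by
    rw [hd_def, Complex.mul_conj, Complex.mul_conj, ← Complex.ofReal_add]
    intro h
    rw [Complex.ofReal_eq_zero] at h
    have h1 : a₁ = 0 := by
      have := Complex.normSq_nonneg a₁
      have := Complex.normSq_nonneg a₂
      have : Complex.normSq a₁ = 0 := by linarith
      exact Complex.normSq_eq_zero.mp this
    have h2 : a₂ = 0 := by
      have := Complex.normSq_nonneg a₁
      have := Complex.normSq_nonneg a₂
      have : Complex.normSq a₂ = 0 := by linarith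
      exact Complex.normSq_eq_zero.mp this
    exact ha (by simp [h1, h2])
  refine ⟨1, -((starRingEnd ℂ) a₁), a₂, -((starRingEnd ℂ) a₂), -a₁, one_ne_zero, ?_, ?_⟩
  · intro h
    exact hd (by rw [hd_def]; linear_combination h)
  intro A G Q
  set N : Matrix (Fin 3) (Fin 3) ℂ :=
    !![d, 0, 0; 0, -a₁, -a₂; 0, (starRingEnd ℂ) a₂, -((starRingEnd ℂ) a₁)] with hN_def
  have hGN : G * N = d • (1 : Matrix (Fin 3) (Fin 3) ℂ) := by
    ext i j
    fin_cases i <;> fin_cases j <;>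
      simp [G, N, Matrix.mul_apply, Fin.sum_univ_succ, Matrix.one_apply,
        Matrix.smul_apply, smul_eq_mul] <;>
      first
      | ring
      | (rw [hd_def]; ring)
  have hGinv : G⁻¹ = d⁻¹ • N := by
    apply Matrix.inv_eq_right_inv
    rw [Matrix.mul_smul, hGN, smul_smul, inv_mul_cancel₀ hd, one_smul]
  have key : N * A * Q = !![0, -(d * d), 0, 0; 0, 0, 0, 0;
      (starRingEnd ℂ) a₂ * b₂ - (starRingEnd ℂ) a₁ * b₁, 0, 0,
      d * ((starRingEnd ℂ) a₂ * c₂ - (starRingEnd ℂ) a₁ * c₁)] := by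
    ext i j
    fin_cases i <;> fin_cases j <;>
      simp [A, Q, N, Matrix.mul_apply, Fin.sum_univ_succ, one_pow] <;>
      first
      | rfl
      | linear_combination -hb
      | linear_combination (-(a₁ * (starRingEnd ℂ) a₁ + a₂ * (starRingEnd ℂ) a₂)) * hc
      | (left; linear_combination -hc)
      | (rw [hd_def]; ring)
      | ring
  have hfull : G⁻¹ * A * Q = d⁻¹ • (N * A * Q) := by
    rw [hGinv, Matrix.smul_mul, Matrix.smul_mul]
  rw [hfull, key]
  refine ⟨by simp only [Matrix.smul_apply, smul_eq_mul]; norm_num <;> exact Or.inr rfl, by simp only [Matrix.smul_apply, smul_eq_mul]; norm_num, by simp only [Matrix.smul_apply, smul_eq_mul]; norm_num <;> exact Or.inr rfl,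
    d⁻¹ * -(d * d), d⁻¹ * ((starRingEnd ℂ) a₂ * b₂ - (starRingEnd ℂ) a₁ * b₁),
    d⁻¹ * (d * ((starRingEnd ℂ) a₂ * c₂ - (starRingEnd ℂ) a₁ * c₁)), ?_⟩
  ext i j
  fin_cases i <;> fin_cases j <;>
    first
    | rfl
    | simp [Matrix.smul_apply, smul_eq_mul, Matrix.vecHead, Matrix.vecTail]
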